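/- Let R be a ring with unit and A a (not necessarily unital) associative ring. Let σ: R → M_A be a map with σ(1) = 1 (the identity bimultiplication), such that for all x, y ∈ R the bimultiplications σ(x) and σ(y) are permutable and both σ(x+y) − σ(x) − σ(y) and σ(xy) − σ(x)σ(y) are inner bimultiplications. Then the bicenter C_A, with the operations x·c = σ(x)c and c·x = cσ(x) for x ∈ R and c ∈ C_A, is a unital R-bimodule. Moreover this R-bimodule structure is unchanged if σ is replaced by any σ': R → M_A such that σ'(x) − σ(x) is an inner bimultiplication for every x ∈ R. -/

import Mathlib

/-- A bimultiplication of a (not necessarily unital) associative ring `A`: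
a pair of maps `a ↦ σa` (`left`) and `a ↦ aσ` (`right`) satisfying
`σ(a+b) = σa + σb`, `(a+b)σ = aσ + bσ`, `σ(ab) = (σa)b`, `(ab)σ = a(bσ)`
and `a(σb) = (aσ)b`. -/
structure Bimul (A : Type*) [NonUnitalRing A] where
  left : A → A
  right : A → A
  left_add : ∀ a b : A, left (a + b) = left a + left b
  right_add : ∀ a b : A, right (a + b) = right a + right b
  left_mul : ∀ a b : A, left (a * b) = left a * b
  right_mul : ∀ a b : A, right (a * b) = a * right b
  middle : ∀ a b : A, a * left b = right a * b

namespace Bimul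

variable {A : Type*} [NonUnitalRing A]

/-- The sum of two bimultiplications: `(σ+ν)a = σa + νa`, `a(σ+ν) = aσ + aν`. -/
instance : Add (Bimul A) :=
  ⟨fun σ ν =>
    { left := fun a => σ.left a + ν.left a
      right := fun a => σ.right a + ν.right a
      left_add := fun a b => by rw [σ.left_add, ν.left_add]; abel
      right_add := fun a b => by rw [σ.right_add, ν.right_add]; abel
      left_mul := fun a b => by rw [σ.left_mul, ν.left_mul, add_mul]
      right_mul := fun a b => by rw [σ.right_mul, ν.right_mul, mul_add]
      middle := fun a b => by rw [mul_add, add_mul, σ.middle, ν.middle] }⟩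

/-- The product of two bimultiplications: `(σν)a = σ(νa)`, `a(σν) = (aσ)ν`. -/
instance : Mul (Bimul A) :=
  ⟨fun σ ν =>
    { left := fun a => σ.left (ν.left a)
      right := fun a => ν.right (σ.right a)
      left_add := fun a b => by rw [ν.left_add, σ.left_add]
      right_add := fun a b => by rw [σ.right_add, ν.right_add]
      left_mul := fun a b => by rw [ν.left_mul, σ.left_mul]
      right_mul := fun a b => by rw [σ.right_mul, ν.right_mul]
      middle := fun a b => by rw [σ.middle, ν.middle] }⟩

/-- The zero bimultiplication. -/
instance : Zero (Bimul A) :=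
  ⟨{ left := fun _ => 0
     right := fun _ => 0
     left_add := fun _ _ => by simp
     right_add := fun _ _ => by simp
     left_mul := fun _ _ => by simp
     right_mul := fun _ _ => by simp
     middle := fun _ _ => by simp }⟩

/-- The negative of a bimultiplication. -/
instance : Neg (Bimul A) :=
  ⟨fun σ =>
    { left := fun a => -σ.left a
      right := fun a => -σ.right a
      left_add := fun a b => by rw [σ.left_add]; abel
      right_add := fun a b => by rw [σ.right_add]; abel
      left_mul := fun a b => by rw [σ.left_mul, neg_mul]
      right_mul := fun a b => by rw [σ.right_mul, mul_neg]
      middle := fun a b => by rw [mul_neg, neg_mul, σ.middle] }⟩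

/-- Difference of bimultiplications. -/
instance : Sub (Bimul A) := ⟨fun σ ν => σ + -ν⟩

/-- The identity bimultiplication, whose left and right actions are the identity map. -/
instance : One (Bimul A) :=
  ⟨{ left := id
     right := id
     left_add := fun _ _ => rfl
     right_add := fun _ _ => rfl
     left_mul := fun _ _ => rfl
     right_mul := fun _ _ => rfl
     middle := fun _ _ => rfl }⟩

/-- The inner bimultiplication `μ_c` determined by `c ∈ A`:
`μ_c a = ca`, `a μ_c = ac`. -/
def inner (c : A) : Bimul A where
  left a := c * a
  right a := a * c
  left_add a b := mul_add c a b
  right_add a b := add_mul a b c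
  left_mul a b := (mul_assoc c a b).symm
  right_mul a b := mul_assoc a b c
  middle a b := (mul_assoc a c b).symm

/-- Two bimultiplications `σ`, `ν` are permutable if `σ(aν) = (σa)ν` and
`ν(aσ) = (νa)σ` for all `a`. -/
def Permutable (σ ν : Bimul A) : Prop :=
  (∀ a : A, σ.left (ν.right a) = ν.right (σ.left a)) ∧
  (∀ a : A, ν.left (σ.right a) = σ.right (ν.left a))

end Bimul

/-- The bicenter of `A`: elements annihilated by multiplication on both sides. -/
def bicenter (A : Type*) [NonUnitalRing A] : Set A :=
  {c | ∀ a : A, c * a = 0 ∧ a * c = 0}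

/-- Let `R` be a ring with unit and `A` a (not necessarily
unital) associative ring, and let `σ : R → M_A` be a map with `σ(1) = 1` such
that all `σ(x)`, `σ(y)` are permutable and `σ(x+y) − σ(x) − σ(y)` and
`σ(xy) − σ(x)σ(y)` are inner.  Then the bicenter `C_A`, with the operations
`x·c = σ(x)c` and `c·x = cσ(x)`, is a unital `R`-bimodule, and this bimodule
structure is unchanged if `σ` is replaced by any `σ'` with `σ'(x) − σ(x)`
inner for every `x`. -/
theorem bicenter_bimodule (R A : Type*) [Ring R] [NonUnitalRing A]
    (σ : R → Bimul A) (hone : σ 1 = 1)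
    (hperm : ∀ x y : R, Bimul.Permutable (σ x) (σ y))
    (hadd : ∀ x y : R, ∃ a : A, σ (x + y) - σ x - σ y = Bimul.inner a)
    (hmul : ∀ x y : R, ∃ a : A, σ (x * y) - σ x * σ y = Bimul.inner a) :
    -- the bicenter is an abelian group under the addition of `A`
    ((0 : A) ∈ bicenter A ∧
      (∀ c ∈ bicenter A, ∀ d ∈ bicenter A, c + d ∈ bicenter A) ∧
      (∀ c ∈ bicenter A, -c ∈ bicenter A)) ∧
    -- the actions preserve the bicenter
    (∀ (x : R), ∀ c ∈ bicenter A, (σ x).left c ∈ bicenter A ∧ (σ x).right c ∈ bicenter A) ∧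
    -- additivity in the module variable
    (∀ (x : R), ∀ c ∈ bicenter A, ∀ d ∈ bicenter A,
      (σ x).left (c + d) = (σ x).left c + (σ x).left d ∧
      (σ x).right (c + d) = (σ x).right c + (σ x).right d) ∧
    -- additivity in the ring variable
    (∀ (x y : R), ∀ c ∈ bicenter A,
      (σ (x + y)).left c = (σ x).left c + (σ y).left c ∧
      (σ (x + y)).right c = (σ x).right c + (σ y).right c) ∧
    -- unitality
    (∀ c ∈ bicenter A, (σ 1).left c = c ∧ (σ 1).right c = c) ∧
    -- associativity of the two actions
    (∀ (x y : R), ∀ c ∈ bicenter A,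
      (σ (x * y)).left c = (σ x).left ((σ y).left c) ∧
      (σ (x * y)).right c = (σ y).right ((σ x).right c)) ∧
    -- compatibility of the left and the right action: (x·c)·y = x·(c·y)
    (∀ (x y : R), ∀ c ∈ bicenter A,
      (σ y).right ((σ x).left c) = (σ x).left ((σ y).right c)) ∧
    -- invariance under change of σ modulo inner bimultiplications
    (∀ σ' : R → Bimul A, (∀ x : R, ∃ a : A, σ' x - σ x = Bimul.inner a) →
      ∀ (x : R), ∀ c ∈ bicenter A,
        (σ' x).left c = (σ x).left c ∧ (σ' x).right c = (σ x).right c) := by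
  have lz : ∀ ν : Bimul A, ν.left 0 = 0 := fun ν => by
    have := ν.left_add 0 0; simpa using this.symm
  have rz : ∀ ν : Bimul A, ν.right 0 = 0 := fun ν => by
    have := ν.right_add 0 0; simpa using this.symm
  refine ⟨⟨fun a => by simp, ?_, ?_⟩, ?_, ?_, ?_, ?_, ?_, ?_, ?_⟩
  · intro c hc d hd a
    obtain ⟨h1, h2⟩ := hc a; obtain ⟨h3, h4⟩ := hd a
    constructor <;> simp [add_mul, mul_add, h1, h2, h3, h4]
  · intro c hc a
    obtain ⟨h1, h2⟩ := hc a
    constructor <;> simp [h1, h2]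
  · intro x c hc
    constructor
    · intro a
      refine ⟨?_, ?_⟩
      · rw [← (σ x).left_mul, (hc a).1, lz]
      · rw [(σ x).middle]; exact (hc _).2
    · intro a
      refine ⟨?_, ?_⟩
      · rw [← (σ x).middle]; exact (hc _).1
      · rw [← (σ x).right_mul, (hc a).2, rz]
  · intro x c _ d _
    exact ⟨(σ x).left_add c d, (σ x).right_add c d⟩
  · intro x y c hc
    obtain ⟨a, h⟩ := hadd x y
    constructor
    · have h1 : (σ (x+y)).left c + -((σ x).left c) + -((σ y).left c) = a * c :=
        congrArg (·.left c) h
      rw [(hc a).2] at h1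
      linear_combination (norm := abel) h1
    · have h1 : (σ (x+y)).right c + -((σ x).right c) + -((σ y).right c) = c * a :=
        congrArg (·.right c) h
      rw [(hc a).1] at h1
      linear_combination (norm := abel) h1
  · intro c _
    rw [hone]; exact ⟨rfl, rfl⟩
  · intro x y c hc
    obtain ⟨a, h⟩ := hmul x y
    constructor
    · have h1 : (σ (x*y)).left c + -((σ x).left ((σ y).left c)) = a * c :=
        congrArg (·.left c) h
      rw [(hc a).2] at h1
      linear_combination (norm := abel) h1
    · have h1 : (σ (x*y)).right c + -((σ y).right ((σ x).right c)) = c * a :=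
        congrArg (·.right c) h
      rw [(hc a).1] at h1
      linear_combination (norm := abel) h1
  · intro x y c _
    exact ((hperm x y).1 c).symm
  · intro σ' hσ' x c hc
    obtain ⟨a, h⟩ := hσ' x
    constructor
    · have h1 : (σ' x).left c + -((σ x).left c) = a * c := congrArg (·.left c) h
      rw [(hc a).2] at h1
      linear_combination (norm := abel) h1
    · have h1 : (σ' x).right c + -((σ x).right c) = c * a := congrArg (·.right c) h
      rw [(hc a).1] at h1
      linear_combination (norm := abel) h1
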